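/- If an N-qubit state ρ is a product of single-qubit states, i.e. ρ(x,y) = ∏_{j=1}^{N} ρʲ(x j, y j) for single-qubit states ρ¹,…,ρᴺ, then C(ρ) = 0. -/

import Mathlib

open scoped BigOperators ComplexOrder Matrix

/-- Matrices representing operators on qubits indexed by `ι`. -/
abbrev QMat (ι : Type) : Type := Matrix (ι → Fin 2) (ι → Fin 2) ℂ

/-- A multi-qubit state: positive semidefinite with trace one. -/
def IsState {ι : Type} [Fintype ι] [DecidableEq ι] (ρ : QMat ι) : Prop :=
  ρ.PosSemidef ∧ ρ.trace = 1

/-- Combine `u : A → Fin 2` with `w : Aᶜ → Fin 2` into a function on all qubits. -/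
def glue {ι : Type} [Fintype ι] [DecidableEq ι] (A : Finset ι)
    (u : {x // x ∈ A} → Fin 2) (w : {x // x ∈ Aᶜ} → Fin 2) : ι → Fin 2 :=
  fun x => if h : x ∈ A then u ⟨x, h⟩ else w ⟨x, Finset.mem_compl.mpr h⟩

/-- The reduced matrix on the qubits in `A`, obtained by tracing out `Aᶜ`;
`Tr_B ρ = reduceTo Bᶜ ρ`. -/
noncomputable def reduceTo {ι : Type} [Fintype ι] [DecidableEq ι] (A : Finset ι)
    (ρ : QMat ι) : QMat {x // x ∈ A} :=
  fun u v => ∑ w : {x // x ∈ Aᶜ} → Fin 2, ρ (glue A u w) (glue A v w)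

/-- The Kronecker product of a state on `A` and a state on `Aᶜ`, with the tensor
factors placed back at their original qubit positions. -/
def boxProd {ι : Type} [Fintype ι] [DecidableEq ι] (A : Finset ι)
    (σ₁ : QMat {x // x ∈ A}) (σ₂ : QMat {x // x ∈ Aᶜ}) : QMat ι :=
  fun x y =>
    σ₁ (fun a => x a.1) (fun a => y a.1) * σ₂ (fun b => x b.1) (fun b => y b.1)

/-- The cumulative correlation measure (CCM), defined recursively: it vanishes on
one-qubit states, and otherwise is the minimum over all bipartitions `(A, Aᶜ)` of
`2^(N-2) * D(ρ, ρ_A ⊠ ρ_{Aᶜ}) + C(ρ_A) + C(ρ_{Aᶜ})`. -/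
noncomputable def CCM (D : ∀ (κ : Type) [Fintype κ] [DecidableEq κ], QMat κ → QMat κ → ℝ)
    (ι : Type) [Fintype ι] [DecidableEq ι] (ρ : QMat ι) : ℝ :=
  if Fintype.card ι ≤ 1 then 0
  else
    sInf { r : ℝ |
      ∃ A : {A : Finset ι // A.Nonempty ∧ Aᶜ.Nonempty},
        r = (2 : ℝ) ^ (Fintype.card ι - 2) *
              D ι ρ (boxProd A.1 (reduceTo A.1 ρ) (reduceTo (A.1 : Finset ι)ᶜ ρ)) +
            CCM D {x // x ∈ A.1} (reduceTo A.1 ρ) +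
            CCM D {x // x ∈ (A.1 : Finset ι)ᶜ} (reduceTo (A.1 : Finset ι)ᶜ ρ) }
termination_by Fintype.card ι
decreasing_by
  · have hA : (A.1 : Finset ι) ≠ Finset.univ := by
      intro h
      rcases A.2.2 with ⟨x, hx⟩
      rw [h] at hx
      simp at hx
    calc Fintype.card {x // x ∈ A.1} = (A.1 : Finset ι).card := Fintype.card_coe _
      _ < Fintype.card ι := (Finset.card_lt_iff_ne_univ _).mpr hA
  · have hA : ((A.1 : Finset ι)ᶜ : Finset ι) ≠ Finset.univ :=
      (Finset.compl_ne_univ_iff_nonempty _).mpr A.2.1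
    calc Fintype.card {x // x ∈ (A.1 : Finset ι)ᶜ} = ((A.1 : Finset ι)ᶜ).card :=
        Fintype.card_coe _
      _ < Fintype.card ι := (Finset.card_lt_iff_ne_univ _).mpr hA
/-- The product Kraus operator `E_f = ⊗_j K j (f j)` acting on all qubits. -/
def krausProd {ι : Type} [Fintype ι] (m : ι → ℕ)
    (K : ∀ j : ι, Fin (m j) → Matrix (Fin 2) (Fin 2) ℂ) (f : ∀ j, Fin (m j)) :
    Matrix (ι → Fin 2) (ι → Fin 2) ℂ :=
  fun x y => ∏ j, K j (f j) (x j) (y j)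

/-- The local quantum operation `ε = ε¹ ⊗ ⋯ ⊗ εᴺ` determined by single-qubit
Kraus operators `K j i` on each qubit `j`. -/
noncomputable def applyLocalKraus {ι : Type} [Fintype ι] [DecidableEq ι] (m : ι → ℕ)
    (K : ∀ j : ι, Fin (m j) → Matrix (Fin 2) (Fin 2) ℂ) (ρ : QMat ι) : QMat ι :=
  ∑ f : ∀ j, Fin (m j), krausProd m K f * ρ * (krausProd m K f)ᴴ

/-- The axioms required of the distance `D`: nonnegativity and `D(ρ,ρ) = 0`,
invariance under unitary conjugation, contractivity under local quantum
operations, and monotonicity under partial traces. -/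
structure DistanceAxioms
    (D : ∀ (κ : Type) [Fintype κ] [DecidableEq κ], QMat κ → QMat κ → ℝ) : Prop where
  nonneg : ∀ (ι : Type) [Fintype ι] [DecidableEq ι] (ρ σ : QMat ι),
    IsState ρ → IsState σ → 0 ≤ D ι ρ σ
  self_eq_zero : ∀ (ι : Type) [Fintype ι] [DecidableEq ι] (ρ : QMat ι),
    IsState ρ → D ι ρ ρ = 0
  unitary_invariance : ∀ (ι : Type) [Fintype ι] [DecidableEq ι]
      (U : Matrix (ι → Fin 2) (ι → Fin 2) ℂ), U * Uᴴ = 1 → Uᴴ * U = 1 →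
      ∀ ρ σ : QMat ι, IsState ρ → IsState σ →
        D ι (U * ρ * Uᴴ) (U * σ * Uᴴ) = D ι ρ σ
  contractivity : ∀ (ι : Type) [Fintype ι] [DecidableEq ι]
      (m : ι → ℕ) (K : ∀ j : ι, Fin (m j) → Matrix (Fin 2) (Fin 2) ℂ),
      (∀ j, ∑ i, (K j i)ᴴ * K j i = 1) →
      ∀ ρ σ : QMat ι, IsState ρ → IsState σ →
        D ι (applyLocalKraus m K ρ) (applyLocalKraus m K σ) ≤ D ι ρ σ
  monotonicity : ∀ (ι : Type) [Fintype ι] [DecidableEq ι] (B : Finset ι)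
      (ρ σ : QMat ι), IsState ρ → IsState σ →
        D {x // x ∈ Bᶜ} (reduceTo Bᶜ ρ) (reduceTo Bᶜ σ) ≤ D ι ρ σ

/-- The Kronecker product of multi-qubit states, on the disjoint union of the
qubit index sets. -/
def kron {ι κ : Type} (φ : QMat ι) (ψ : QMat κ) : QMat (ι ⊕ κ) :=
  fun x y =>
    φ (fun i => x (Sum.inl i)) (fun i => y (Sum.inl i)) *
      ψ (fun j => x (Sum.inr j)) (fun j => y (Sum.inr j))
/-- If an `N`-qubit state `ρ` is a product of single-qubit states,
i.e. `ρ(x,y) = ∏ j, ρʲ(x j, y j)` for single-qubit states `ρ¹, …, ρᴺ`, then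
`C(ρ) = 0`. -/
lemma prodState_isState {ι : Type} [Fintype ι] [DecidableEq ι]
    (ρs : ι → Matrix (Fin 2) (Fin 2) ℂ)
    (h : ∀ j, (ρs j).PosSemidef ∧ (ρs j).trace = 1) :
    IsState (fun x y => ∏ j, ρs j (x j) (y j) : QMat ι) := by
  have hB : ∀ j, ∃ B, ρs j = Bᴴ * B := fun j =>
    by open scoped MatrixOrder Matrix.Norms.L2Operator in
      exact CStarAlgebra.nonneg_iff_eq_star_mul_self.mp (h j).1.nonneg
  choose B hBe using hB
  constructor
  · have key : (fun x y => ∏ j, ρs j (x j) (y j) : QMat ι)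
        = (Matrix.of fun g x => ∏ j, B j (g j) (x j) : QMat ι)ᴴ *
          (Matrix.of fun g x => ∏ j, B j (g j) (x j) : QMat ι) := by
      funext x y
      rw [Matrix.mul_apply]
      simp only [Matrix.conjTranspose_apply]
      calc ∏ j, ρs j (x j) (y j)
          = ∏ j, ∑ i, star (B j i (x j)) * B j i (y j) := by
            refine Finset.prod_congr rfl fun j _ => ?_
            rw [hBe j, Matrix.mul_apply]
            simp [Matrix.conjTranspose_apply]
        _ = ∑ g : ι → Fin 2, ∏ j, star (B j (g j) (x j)) * B j (g j) (y j) :=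
            Fintype.prod_sum _
        _ = ∑ g : ι → Fin 2, star ((Matrix.of fun g x => ∏ j, B j (g j) (x j) : QMat ι) g x)
              * (Matrix.of fun g x => ∏ j, B j (g j) (x j) : QMat ι) g y := by
            refine Finset.sum_congr rfl fun g _ => ?_
            simp [Finset.prod_mul_distrib]
    rw [key]
    exact Matrix.posSemidef_conjTranspose_mul_self _
  · have : (Matrix.trace (fun x y => ∏ j, ρs j (x j) (y j) : QMat ι))
        = ∏ j, (ρs j).trace := by
      simp only [Matrix.trace, Matrix.diag]
      rw [← Fintype.prod_sum fun j i => ρs j i i]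
    rw [this]
    exact Finset.prod_eq_one fun j _ => (h j).2

lemma glue_split {ι : Type} [Fintype ι] [DecidableEq ι] (A : Finset ι)
    (ρs : ι → Matrix (Fin 2) (Fin 2) ℂ)
    (u v : {x // x ∈ A} → Fin 2) (w w' : {x // x ∈ Aᶜ} → Fin 2) :
    ∏ j, ρs j (glue A u w j) (glue A v w' j)
      = (∏ a : {x // x ∈ A}, ρs a.1 (u a) (v a)) *
        ∏ b : {x // x ∈ Aᶜ}, ρs b.1 (w b) (w' b) := by
  rw [← Finset.prod_mul_prod_compl A]
  congr 1
  · rw [Finset.univ_eq_attach,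
      ← Finset.prod_attach A (fun j => ρs j (glue A u w j) (glue A v w' j))]
    refine Finset.prod_congr rfl fun a _ => ?_
    simp [glue, a.2]
  · rw [Finset.univ_eq_attach,
      ← Finset.prod_attach Aᶜ (fun j => ρs j (glue A u w j) (glue A v w' j))]
    refine Finset.prod_congr rfl fun b _ => ?_
    have hb : b.1 ∉ A := Finset.mem_compl.mp b.2
    simp [glue, hb]

lemma reduceTo_prod {ι : Type} [Fintype ι] [DecidableEq ι] (A : Finset ι)
    (ρs : ι → Matrix (Fin 2) (Fin 2) ℂ)
    (h : ∀ j, (ρs j).trace = 1) :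
    reduceTo A (fun x y => ∏ j, ρs j (x j) (y j) : QMat ι)
      = (fun u v => ∏ a : {x // x ∈ A}, ρs a.1 (u a) (v a) : QMat {x // x ∈ A}) := by
  funext u v
  show (∑ w : {x // x ∈ Aᶜ} → Fin 2, ∏ j, ρs j (glue A u w j) (glue A v w j)) = _
  have : ∀ w : {x // x ∈ Aᶜ} → Fin 2,
      ∏ j, ρs j (glue A u w j) (glue A v w j)
        = (∏ a : {x // x ∈ A}, ρs a.1 (u a) (v a)) *
          ∏ b : {x // x ∈ Aᶜ}, ρs b.1 (w b) (w b) := fun w => glue_split A ρs u v w w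
  simp only [this, ← Finset.mul_sum]
  have : (∑ w : {x // x ∈ Aᶜ} → Fin 2, ∏ b : {x // x ∈ Aᶜ}, ρs b.1 (w b) (w b))
      = ∏ b : {x // x ∈ Aᶜ}, ∑ i, ρs b.1 i i := (Fintype.prod_sum fun (b : {x // x ∈ Aᶜ}) (i : Fin 2) => ρs b.1 i i).symm
  rw [this]
  have : (∏ b : {x // x ∈ Aᶜ}, ∑ i, ρs b.1 i i) = 1 := by
    refine Finset.prod_eq_one fun b _ => ?_
    have := h b.1
    simpa [Matrix.trace, Matrix.diag] using this
  rw [this, mul_one]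

lemma boxProd_prod {ι : Type} [Fintype ι] [DecidableEq ι] (A : Finset ι)
    (ρs : ι → Matrix (Fin 2) (Fin 2) ℂ) :
    boxProd A (fun u v => ∏ a : {x // x ∈ A}, ρs a.1 (u a) (v a))
      (fun u v => ∏ b : {x // x ∈ Aᶜ}, ρs b.1 (u b) (v b))
      = (fun x y => ∏ j, ρs j (x j) (y j) : QMat ι) := by
  funext x y
  show (∏ a : {x // x ∈ A}, ρs a.1 (x a.1) (y a.1)) *
    (∏ b : {x // x ∈ Aᶜ}, ρs b.1 (x b.1) (y b.1)) = ∏ j, ρs j (x j) (y j)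
  rw [← Finset.prod_mul_prod_compl A (fun j => ρs j (x j) (y j))]
  congr 1
  · rw [Finset.univ_eq_attach]
    exact Finset.prod_attach A (fun j => ρs j (x j) (y j))
  · rw [Finset.univ_eq_attach]
    exact Finset.prod_attach Aᶜ (fun j => ρs j (x j) (y j))


lemma ccm_prod_aux
    (D : ∀ (κ : Type) [Fintype κ] [DecidableEq κ], QMat κ → QMat κ → ℝ)
    (hD : DistanceAxioms D) :
    ∀ n : ℕ, ∀ (ι : Type) [Fintype ι] [DecidableEq ι], Fintype.card ι = n →
    ∀ (ρs : ι → Matrix (Fin 2) (Fin 2) ℂ),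
    (∀ j, (ρs j).PosSemidef ∧ (ρs j).trace = 1) →
    CCM D ι (fun x y => ∏ j, ρs j (x j) (y j)) = 0 := by
  intro n
  induction n using Nat.strong_induction_on with
  | _ n ih =>
  intro ι _ _ hcard ρs hρs
  by_cases hle : Fintype.card ι ≤ 1
  · rw [CCM.eq_1 D ι (fun x y => ∏ j, ρs j (x j) (y j)), if_pos hle]
  · rw [CCM.eq_1 D ι (fun x y => ∏ j, ρs j (x j) (y j)), if_neg hle]
    set ρ : QMat ι := (fun x y => ∏ j, ρs j (x j) (y j)) with hρdef
    have hstate : IsState ρ := prodState_isState ρs hρs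
    have htr : ∀ j, (ρs j).trace = 1 := fun j => (hρs j).2
    have hzero : ∀ A : {A : Finset ι // A.Nonempty ∧ Aᶜ.Nonempty},
        (2 : ℝ) ^ (Fintype.card ι - 2) *
            D ι ρ (boxProd A.1 (reduceTo A.1 ρ) (reduceTo (A.1 : Finset ι)ᶜ ρ)) +
          CCM D {x // x ∈ A.1} (reduceTo A.1 ρ) +
          CCM D {x // x ∈ (A.1 : Finset ι)ᶜ} (reduceTo (A.1 : Finset ι)ᶜ ρ) = 0 := by
      intro A
      have hredA : reduceTo A.1 ρ
          = (fun u v => ∏ a : {x // x ∈ A.1}, ρs a.1 (u a) (v a)) :=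
        reduceTo_prod A.1 ρs htr
      have hredB : reduceTo (A.1 : Finset ι)ᶜ ρ
          = (fun u v => ∏ b : {x // x ∈ (A.1 : Finset ι)ᶜ}, ρs b.1 (u b) (v b)) :=
        reduceTo_prod _ ρs htr
      have hbox : boxProd A.1 (reduceTo A.1 ρ) (reduceTo (A.1 : Finset ι)ᶜ ρ) = ρ := by
        rw [hredA, hredB]; exact boxProd_prod A.1 ρs
      have h1 : D ι ρ (boxProd A.1 (reduceTo A.1 ρ) (reduceTo (A.1 : Finset ι)ᶜ ρ)) = 0 := by
        rw [hbox]; exact hD.self_eq_zero ι ρ hstate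
      have hltA : (A.1 : Finset ι).card < n := by
        rw [← hcard]
        refine (Finset.card_lt_iff_ne_univ _).mpr fun h => ?_
        rcases A.2.2 with ⟨x, hx⟩
        rw [h] at hx
        simp at hx
      have hltB : ((A.1 : Finset ι)ᶜ).card < n := by
        rw [← hcard]
        exact (Finset.card_lt_iff_ne_univ _).mpr
          ((Finset.compl_ne_univ_iff_nonempty _).mpr A.2.1)
      have h2 : CCM D {x // x ∈ A.1} (reduceTo A.1 ρ) = 0 := by
        rw [hredA]
        exact ih _ hltA _ (Fintype.card_coe _) (fun a => ρs a.1) (fun a => hρs a.1)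
      have h3 : CCM D {x // x ∈ (A.1 : Finset ι)ᶜ} (reduceTo (A.1 : Finset ι)ᶜ ρ) = 0 := by
        rw [hredB]
        exact ih _ hltB _ (Fintype.card_coe _) (fun b => ρs b.1) (fun b => hρs b.1)
      rw [h1, h2, h3]
      ring
    have hsetE : {r : ℝ |
        ∃ A : {A : Finset ι // A.Nonempty ∧ Aᶜ.Nonempty},
          r = (2 : ℝ) ^ (Fintype.card ι - 2) *
                D ι ρ (boxProd A.1 (reduceTo A.1 ρ) (reduceTo (A.1 : Finset ι)ᶜ ρ)) +
              CCM D {x // x ∈ A.1} (reduceTo A.1 ρ) +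
              CCM D {x // x ∈ (A.1 : Finset ι)ᶜ} (reduceTo (A.1 : Finset ι)ᶜ ρ)} = {0} := by
      ext r
      simp only [Set.mem_setOf_eq, Set.mem_singleton_iff]
      constructor
      · rintro ⟨A, rfl⟩
        exact hzero A
      · rintro rfl
        obtain ⟨a, b, hab⟩ := Fintype.exists_pair_of_one_lt_card (lt_of_not_ge hle)
        refine ⟨⟨{a}, Finset.singleton_nonempty a,
          ⟨b, Finset.mem_compl.mpr (by simp [hab.symm])⟩⟩, ?_⟩
        exact (hzero _).symm
    rw [hsetE]
    exact csInf_singleton 0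


theorem ccm_product_eq_zero
    (D : ∀ (κ : Type) [Fintype κ] [DecidableEq κ], QMat κ → QMat κ → ℝ)
    (hD : DistanceAxioms D)
    (N : ℕ) (hN : 1 ≤ N)
    (ρs : Fin N → Matrix (Fin 2) (Fin 2) ℂ)
    (hρs : ∀ j, (ρs j).PosSemidef ∧ (ρs j).trace = 1)
    (ρ : QMat (Fin N)) (hρ : IsState ρ)
    (hprod : ∀ x y, ρ x y = ∏ j, ρs j (x j) (y j)) :
    CCM D (Fin N) ρ = 0 := by
  
  have hρeq : ρ = (fun x y => ∏ j, ρs j (x j) (y j)) := by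
    funext x y
    exact hprod x y
  rw [hρeq]
  exact ccm_prod_aux D hD N (Fin N) (Fintype.card_fin N) ρs hρs
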